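/- In type A_{n−1} with gcd(m,n) = 1, the sum over all partitions λ of n with exactly k+1 parts of q^{m(n−ℓ(λ)) − c(λ)}·(1/[m]_q)·[m choose μ(λ)]_q equals q^{(n−1−k)(m−1−k)}·(1/[k+1]_q)·[n−1 choose k]_q·[m−1 choose k]_q, for 0 ≤ k ≤ n−1. -/

import Mathlib

open Finset Polynomial

noncomputable def qbinom : ℕ → ℕ → Polynomial ℤ
  | _, 0 => 1
  | 0, _ + 1 => 0
  | n + 1, k + 1 => qbinom n k + Polynomial.X ^ (k + 1) * qbinom n (k + 1)

noncomputable def qmultinom (N : ℕ) : List ℕ → Polynomial ℤ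
  | [] => 1
  | a :: l => qbinom N a * qmultinom (N - a) l

noncomputable def toRF (p : Polynomial ℤ) : RatFunc ℚ :=
  algebraMap (Polynomial ℚ) (RatFunc ℚ) (p.map (Int.castRingHom ℚ))

-- toRF as ring hom
lemma toRF_zero : toRF 0 = 0 := by simp [toRF]
lemma toRF_one : toRF 1 = 1 := by simp [toRF]
lemma toRF_add (p q : Polynomial ℤ) : toRF (p + q) = toRF p + toRF q := by
  simp [toRF, Polynomial.map_add]
lemma toRF_mul (p q : Polynomial ℤ) : toRF (p * q) = toRF p * toRF q := by
  simp [toRF, Polynomial.map_mul]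
lemma toRF_X : toRF Polynomial.X = RatFunc.X := by
  simp [toRF, RatFunc.algebraMap_X]
lemma toRF_pow (p : Polynomial ℤ) (t : ℕ) : toRF (p ^ t) = toRF p ^ t := by
  simp [toRF, Polynomial.map_pow]
lemma toRF_X_pow (t : ℕ) : toRF (Polynomial.X ^ t) = RatFunc.X ^ t := by
  rw [toRF_pow, toRF_X]
lemma toRF_eq_zero_iff {p : Polynomial ℤ} : toRF p = 0 ↔ p = 0 := by
  constructor
  · intro h
    have h2 : p.map (Int.castRingHom ℚ) = 0 := by
      apply RatFunc.algebraMap_injective ℚ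
      simpa [toRF] using h
    have h3 : Function.Injective (Polynomial.map (Int.castRingHom ℚ)) :=
      Polynomial.map_injective _ Int.cast_injective
    simpa using h3 (by simpa using h2)
  · rintro rfl; exact toRF_zero

noncomputable def qnat (k : ℕ) : Polynomial ℤ := ∑ i ∈ range k, Polynomial.X ^ i

noncomputable def qfact : ℕ → Polynomial ℤ
  | 0 => 1
  | k + 1 => qfact k * qnat (k + 1)

lemma qbinom_zero_right (n : ℕ) : qbinom n 0 = 1 := by cases n <;> rfl

lemma qbinom_eq_zero {n k : ℕ} (h : n < k) : qbinom n k = 0 := by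
  induction n generalizing k with
  | zero => cases k with
    | zero => omega
    | succ k => rfl
  | succ n ih =>
    cases k with
    | zero => omega
    | succ k =>
      rw [qbinom, ih (by omega), ih (by omega)]
      ring

lemma qbinom_self (n : ℕ) : qbinom n n = 1 := by
  induction n with
  | zero => rfl
  | succ n ih => rw [qbinom, ih, qbinom_eq_zero (by omega)]; ring

lemma qnat_add (a b : ℕ) : qnat (a + b) = qnat a + Polynomial.X ^ a * qnat b := by
  simp only [qnat, Finset.sum_range_add, Finset.mul_sum, pow_add]

lemma qbinom_mul_qfact {k n : ℕ} (h : k ≤ n) :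
    qbinom n k * (qfact k * qfact (n - k)) = qfact n := by
  induction n generalizing k with
  | zero =>
    interval_cases k
    simp [qbinom, qfact]
  | succ n ih =>
    cases k with
    | zero => simp [qbinom_zero_right, qfact]
    | succ c =>
      rcases Nat.lt_or_ge c n with hc | hc
      · -- c + 1 ≤ n
        have h1 := ih (k := c) (by omega)
        have h2 := ih (k := c + 1) (by omega)
        set d := n - (c+1) with hd
        have e1 : n - c = d + 1 := by omega
        have e2 : n + 1 - (c + 1) = d + 1 := by omega
        have e3 : (c + 1) + (d + 1) = n + 1 := by omega
        rw [e1] at h1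
        rw [e2]
        show (qbinom n c + Polynomial.X ^ (c + 1) * qbinom n (c + 1)) * (qfact (c+1) * qfact (d+1)) = qfact (n+1)
        have hq1 : qfact (c+1) = qfact c * qnat (c+1) := rfl
        have hq2 : qfact (d+1) = qfact d * qnat (d+1) := rfl
        have hq3 : qfact (n+1) = qfact n * qnat (n+1) := rfl
        have hq4 : qnat (n+1) = qnat (c+1) + Polynomial.X ^ (c+1) * qnat (d+1) := by
          rw [← e3, qnat_add]
        rw [hq2] at h1
        rw [hq1] at h2
        rw [hq1, hq2, hq3, hq4]
        linear_combination qnat (c+1) * h1 + Polynomial.X ^ (c+1) * qnat (d+1) * h2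
      · -- c ≥ n, so c = n (since c + 1 ≤ n + 1)
        have : c = n := by omega
        subst this
        rw [qbinom_self]
        simp [qfact]

----------------------------------------------------------------
-- RatFunc level
----------------------------------------------------------------

noncomputable abbrev QB (n k : ℕ) : RatFunc ℚ := toRF (qbinom n k)
noncomputable abbrev QF (n : ℕ) : RatFunc ℚ := toRF (qfact n)
noncomputable abbrev QN (n : ℕ) : RatFunc ℚ := toRF (qnat n)
noncomputable abbrev RX : RatFunc ℚ := RatFunc.X

lemma qnat_ne_zero {k : ℕ} (h : 0 < k) : qnat k ≠ 0 := by
  intro hc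
  have h2 := congrArg (Polynomial.eval 1) hc
  simp [qnat, Polynomial.eval_finset_sum] at h2
  omega

lemma qfact_ne_zero (k : ℕ) : qfact k ≠ 0 := by
  induction k with
  | zero => simp [qfact]
  | succ k ih => exact mul_ne_zero ih (qnat_ne_zero (by omega))

lemma QF_ne_zero (k : ℕ) : QF k ≠ 0 := by
  rw [Ne, toRF_eq_zero_iff]; exact qfact_ne_zero k

lemma QN_ne_zero {k : ℕ} (h : 0 < k) : QN k ≠ 0 := by
  rw [Ne, toRF_eq_zero_iff]; exact qnat_ne_zero h

lemma QB_eq {k n : ℕ} (h : k ≤ n) : QB n k = QF n / (QF k * QF (n - k)) := by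
  rw [eq_div_iff (mul_ne_zero (QF_ne_zero k) (QF_ne_zero (n-k)))]
  rw [← toRF_mul, ← toRF_mul, qbinom_mul_qfact h]

lemma QB_eq_zero {k n : ℕ} (h : n < k) : QB n k = 0 := by
  show toRF (qbinom n k) = 0
  rw [qbinom_eq_zero h, toRF_zero]

lemma QB_zero (n : ℕ) : QB n 0 = 1 := by
  show toRF (qbinom n 0) = 1
  rw [qbinom_zero_right, toRF_one]

lemma QB_self (n : ℕ) : QB n n = 1 := by
  show toRF (qbinom n n) = 1
  rw [qbinom_self, toRF_one]

lemma QB_pascal (n k : ℕ) : QB (n+1) (k+1) = QB n k + RX ^ (k+1) * QB n (k+1) := by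
  show toRF (qbinom n k + Polynomial.X ^ (k + 1) * qbinom n (k + 1)) = _
  rw [toRF_add, toRF_mul, toRF_X_pow]

lemma QB_symm {k n : ℕ} (h : k ≤ n) : QB n k = QB n (n - k) := by
  rw [QB_eq h, QB_eq (Nat.sub_le n k)]
  rw [Nat.sub_sub_self h, mul_comm]

lemma QB_trinom {j c m : ℕ} (h : j ≤ c) :
    QB m j * QB (m - j) (c - j) = QB m c * QB c j := by
  rcases le_or_gt c m with hc | hc
  · have e1 : m - j - (c - j) = m - c := by omega
    rw [QB_eq (h.trans hc), QB_eq (by omega : c - j ≤ m - j), QB_eq hc, QB_eq h, e1]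
    have n1 := QF_ne_zero j
    have n2 := QF_ne_zero (m - j)
    have n3 := QF_ne_zero (c - j)
    have n4 := QF_ne_zero (m - c)
    have n5 := QF_ne_zero c
    field_simp
  · rw [QB_eq_zero hc]
    rcases le_or_gt j m with hj | hj
    · rw [QB_eq_zero (by omega : m - j < c - j)]; ring
    · rw [QB_eq_zero hj]; ring

lemma QN_mul_QB {m k : ℕ} (hm : 0 < m) :
    QN m * QB (m - 1) k = QN (k + 1) * QB m (k + 1) := by
  rcases le_or_gt (k+1) m with hc | hc
  · obtain ⟨m', rfl⟩ : ∃ m', m = m' + 1 := ⟨m - 1, by omega⟩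
    have e0 : m' + 1 - 1 = m' := rfl
    have hqn : QN (m'+1) = QF (m'+1) / QF m' := by
      rw [eq_div_iff (QF_ne_zero m')]
      show toRF (qnat (m'+1)) * toRF (qfact m') = toRF (qfact (m'+1))
      rw [← toRF_mul]
      show toRF (qnat (m'+1) * qfact m') = toRF (qfact m' * qnat (m'+1))
      ring_nf
    have hqk : QN (k+1) = QF (k+1) / QF k := by
      rw [eq_div_iff (QF_ne_zero k)]
      rw [← toRF_mul]
      show toRF (qnat (k+1) * qfact k) = toRF (qfact k * qnat (k+1))
      ring_nf
    have e1 : m' + 1 - (k + 1) = m' - k := by omega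
    rw [e0, hqn, hqk, QB_eq (by omega : k ≤ m'), QB_eq hc, e1]
    have n1 := QF_ne_zero k
    have n2 := QF_ne_zero m'
    have n3 := QF_ne_zero (m' - k)
    have n4 := QF_ne_zero (k + 1)
    field_simp
  · rw [QB_eq_zero hc, QB_eq_zero (by omega : m - 1 < k)]; ring

lemma RX_ne_zero : RX ≠ 0 := RatFunc.X_ne_zero

lemma RXz (a : ℕ) : RX ^ ((a : ℤ)) = RX ^ a := zpow_natCast RX a

lemma QB_vandermonde (n : ℕ) : ∀ m k : ℕ, QB (m + n) k =
    ∑ j ∈ range (k + 1), RX ^ (((m : ℤ) - (j:ℕ)) * ((k : ℤ) - (j:ℕ))) * QB m j * QB n (k - j) := by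
  intro m
  induction m with
  | zero =>
    intro k
    rw [Finset.sum_eq_single 0]
    · simp [QB_zero]
    · intro j hj hj0
      rw [QB_eq_zero (by omega : (0:ℕ) < j)]
      ring
    · simp
  | succ m ih =>
    intro k
    cases k with
    | zero => simp [QB_zero]
    | succ K =>
      have expand : ∀ i : ℕ,
          RX ^ ((((m+1:ℕ)) - ((i+1:ℕ):ℤ)) * (((K+1:ℕ):ℤ) - ((i+1:ℕ):ℤ))) * QB (m+1) (i+1) * QB n (K + 1 - (i+1))
          = RX ^ (((m : ℤ) - (i:ℕ)) * ((K : ℤ) - (i:ℕ))) * QB m i * QB n (K - i)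
            + RX ^ (K+1) * (RX ^ (((m : ℤ) - ((i+1:ℕ):ℤ)) * (((K+1:ℕ):ℤ) - ((i+1:ℕ):ℤ))) * QB m (i+1) * QB n (K + 1 - (i+1))) := by
        intro i
        rw [QB_pascal]
        have e1 : K + 1 - (i + 1) = K - i := by omega
        rw [e1]
        have h1 : RX ^ ((((m+1:ℕ)) - ((i+1:ℕ):ℤ)) * (((K+1:ℕ):ℤ) - ((i+1:ℕ):ℤ)))
            = RX ^ (((m : ℤ) - (i:ℕ)) * ((K : ℤ) - (i:ℕ))) := by
          congr 1
          push_cast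
          ring
        have h2 : RX ^ ((((m+1:ℕ)) - ((i+1:ℕ):ℤ)) * (((K+1:ℕ):ℤ) - ((i+1:ℕ):ℤ))) * RX ^ (i+1)
            = RX ^ (K+1) * RX ^ (((m : ℤ) - ((i+1:ℕ):ℤ)) * (((K+1:ℕ):ℤ) - ((i+1:ℕ):ℤ))) := by
          rw [← RXz (i+1), ← RXz (K+1), ← zpow_add₀ RX_ne_zero, ← zpow_add₀ RX_ne_zero]
          congr 1
          push_cast
          ring
        calc RX ^ ((((m+1:ℕ)) - ((i+1:ℕ):ℤ)) * (((K+1:ℕ):ℤ) - ((i+1:ℕ):ℤ))) *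
              (QB m i + RX ^ (i+1) * QB m (i+1)) * QB n (K - i)
            = (RX ^ ((((m+1:ℕ)) - ((i+1:ℕ):ℤ)) * (((K+1:ℕ):ℤ) - ((i+1:ℕ):ℤ)))) * QB m i * QB n (K-i)
              + (RX ^ ((((m+1:ℕ)) - ((i+1:ℕ):ℤ)) * (((K+1:ℕ):ℤ) - ((i+1:ℕ):ℤ))) * RX ^ (i+1)) *
                  QB m (i+1) * QB n (K-i) := by ring
          _ = _ := by rw [h2, h1]; ring
      have lhs : QB (m+1+n) (K+1) = QB (m+n) K + RX ^ (K+1) * QB (m+n) (K+1) := by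
        have e : m+1+n = (m+n)+1 := by omega
        rw [e, QB_pascal]
      rw [lhs, ih K, ih (K+1), Finset.sum_range_succ' _ (K+1), Finset.sum_range_succ' _ (K+1)]
      rw [Finset.sum_congr rfl (fun i _ => expand i), Finset.sum_add_distrib]
      have f0 : RX ^ ((((m+1:ℕ)) - ((0:ℕ):ℤ)) * (((K+1:ℕ):ℤ) - ((0:ℕ):ℤ))) * QB (m+1) 0 * QB n (K + 1 - 0)
          = RX ^ (K+1) * (RX ^ (((m : ℤ) - ((0:ℕ):ℤ)) * (((K+1:ℕ):ℤ) - ((0:ℕ):ℤ))) * QB m 0 * QB n (K + 1 - 0)) := by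
        have e : RX ^ ((((m+1:ℕ)) - ((0:ℕ):ℤ)) * (((K+1:ℕ):ℤ) - ((0:ℕ):ℤ)))
            = RX ^ (K+1) * RX ^ (((m:ℤ) - ((0:ℕ):ℤ)) * (((K+1:ℕ):ℤ) - ((0:ℕ):ℤ))) := by
          rw [← RXz (K+1), ← zpow_add₀ RX_ne_zero]
          congr 1
          push_cast; ring
        rw [e, QB_zero, QB_zero]
        ring
      rw [f0, ← Finset.mul_sum]
      ring

----------------------------------------------------------------
-- q-multinomials
----------------------------------------------------------------

noncomputable abbrev QM (N : ℕ) (l : List ℕ) : RatFunc ℚ := toRF (qmultinom N l)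

lemma QM_nil (N : ℕ) : QM N [] = 1 := toRF_one

lemma QM_cons (N a : ℕ) (l : List ℕ) : QM N (a :: l) = QB N a * QM (N - a) l := by
  show toRF (qbinom N a * qmultinom (N - a) l) = _
  rw [toRF_mul]

lemma QM_eq_zero : ∀ (l : List ℕ) {N : ℕ}, N < l.sum → QM N l = 0 := by
  intro l
  induction l with
  | nil => intro N h; simp at h
  | cons a l ih =>
    intro N h
    rw [QM_cons]
    rcases le_or_gt a N with ha | ha
    · rw [ih (by simp at h ⊢; omega)]; ring
    · rw [QB_eq_zero ha]; ring

lemma QFprod_ne_zero (l : List ℕ) : (l.map QF).prod ≠ 0 := by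
  induction l with
  | nil => simp
  | cons a l ih => simpa using mul_ne_zero (QF_ne_zero a) ih

lemma QM_eq : ∀ (l : List ℕ) {N : ℕ}, l.sum ≤ N →
    QM N l = QF N / ((l.map QF).prod * QF (N - l.sum)) := by
  intro l
  induction l with
  | nil =>
    intro N h
    rw [QM_nil]
    simp
    rw [eq_div_iff (QF_ne_zero N)]
    ring
  | cons a l ih =>
    intro N h
    simp only [List.sum_cons] at h
    rw [QM_cons, QB_eq (by omega), ih (by omega)]
    simp only [List.map_cons, List.prod_cons, List.sum_cons]
    have e : N - a - l.sum = N - (a + l.sum) := by omega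
    rw [e]
    have n1 := QF_ne_zero a
    have n2 := QF_ne_zero (N - a)
    have n3 := QFprod_ne_zero l
    have n4 := QF_ne_zero (N - (a + l.sum))
    field_simp

lemma QM_shift (m a : ℕ) (l : List ℕ) :
    QB m a * QM (m - a) l = QB (m - l.sum) a * QM m l := by
  rcases le_or_gt (a + l.sum) m with h | h
  · rw [QB_eq (by omega : a ≤ m), QB_eq (by omega : a ≤ m - l.sum),
      QM_eq l (by omega), QM_eq l (by omega)]
    have e1 : m - a - l.sum = m - (a + l.sum) := by omega
    have e2 : m - l.sum - a = m - (a + l.sum) := by omega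
    rw [e1, e2]
    have n1 := QF_ne_zero a
    have n2 := QF_ne_zero (m - a)
    have n3 := QFprod_ne_zero l
    have n4 := QF_ne_zero (m - (a + l.sum))
    have n5 := QF_ne_zero (m - l.sum)
    field_simp
  · rcases le_or_gt a m with ha | ha
    · rw [QM_eq_zero l (by omega : m - a < l.sum)]
      rcases le_or_gt l.sum m with hb | hb
      · rw [QB_eq_zero (by omega : m - l.sum < a)]; ring
      · rw [QM_eq_zero l hb]; ring
    · rw [QB_eq_zero ha, QB_eq_zero (by omega : m - l.sum < a)]; ring

lemma qmultinom_replicate_zero (N t : ℕ) : qmultinom N (List.replicate t 0) = 1 := by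
  induction t with
  | zero => rfl
  | succ t ih =>
    show qbinom N 0 * qmultinom (N - 0) (List.replicate t 0) = 1
    rw [qbinom_zero_right, Nat.sub_zero, ih]
    ring

lemma qmultinom_append_zeros (t : ℕ) : ∀ (l : List ℕ) (N : ℕ),
    qmultinom N (l ++ List.replicate t 0) = qmultinom N l := by
  intro l
  induction l with
  | nil => intro N; rw [List.nil_append, qmultinom_replicate_zero, qmultinom]
  | cons a l ih =>
    intro N
    simp only [List.cons_append, qmultinom, ih]

----------------------------------------------------------------
-- multiset lemmas
----------------------------------------------------------------

lemma card_le_sum (s : Multiset ℕ) (h : ∀ x ∈ s, 0 < x) : Multiset.card s ≤ s.sum := by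
  induction s using Multiset.induction_on with
  | empty => simp
  | cons a s ih =>
    simp only [Multiset.card_cons, Multiset.sum_cons]
    have ha : 0 < a := h a (Multiset.mem_cons_self a s)
    have := ih (fun x hx => h x (Multiset.mem_cons_of_mem hx))
    omega

lemma sum_map_pred (s : Multiset ℕ) (h : ∀ x ∈ s, 0 < x) :
    (s.map (fun p => p - 1)).sum = s.sum - Multiset.card s := by
  induction s using Multiset.induction_on with
  | empty => simp
  | cons a s ih =>
    simp only [Multiset.map_cons, Multiset.sum_cons, Multiset.card_cons]
    have ha : 0 < a := h a (Multiset.mem_cons_self a s)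
    have h2 := ih (fun x hx => h x (Multiset.mem_cons_of_mem hx))
    have h3 := card_le_sum s (fun x hx => h x (Multiset.mem_cons_of_mem hx))
    omega

lemma mem_le_sum (s : Multiset ℕ) (x : ℕ) (hx : x ∈ s) : x ≤ s.sum :=
  Multiset.single_le_sum (fun y _ => Nat.zero_le y) x hx

/-- the parts of the partition obtained by removing the first column -/
def nuparts (s : Multiset ℕ) : Multiset ℕ :=
  (s.filter (fun p => 1 < p)).map (fun p => p - 1)

lemma nuparts_pos (s : Multiset ℕ) : ∀ x ∈ nuparts s, 0 < x := by
  intro x hx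
  simp only [nuparts, Multiset.mem_map, Multiset.mem_filter] at hx
  obtain ⟨a, ⟨_, ha⟩, rfl⟩ := hx
  omega

lemma nuparts_sum (s : Multiset ℕ) (h : ∀ x ∈ s, 0 < x) :
    (nuparts s).sum = s.sum - Multiset.card s := by
  rw [nuparts, sum_map_pred _ (fun x hx => by
    have := (Multiset.mem_filter.mp hx).2; omega)]
  have key : Multiset.filter (fun p => 1 < p) s + Multiset.filter (fun p => ¬ 1 < p) s = s :=
    Multiset.filter_add_not _ s
  have h1 : (Multiset.filter (fun p => ¬ 1 < p) s).sum
      = Multiset.card (Multiset.filter (fun p => ¬ 1 < p) s) := by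
    have : ∀ x ∈ Multiset.filter (fun p => ¬ 1 < p) s, x = 1 := by
      intro x hx
      have h2 := Multiset.mem_filter.mp hx
      have := h x h2.1
      omega
    calc (Multiset.filter (fun p => ¬ 1 < p) s).sum
        = (Multiset.replicate (Multiset.card (Multiset.filter (fun p => ¬ 1 < p) s)) 1).sum := by
          rw [← Multiset.eq_replicate.mpr ⟨rfl, this⟩]
      _ = _ := by rw [Multiset.sum_replicate]; simp
  have h2 := congrArg Multiset.sum key
  have h3 := congrArg Multiset.card key
  rw [Multiset.sum_add] at h2
  rw [Multiset.card_add] at h3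
  have h4 := card_le_sum (Multiset.filter (fun p => 1 < p) s) (fun x hx => by
    have := (Multiset.mem_filter.mp hx).2; omega)
  omega

lemma nuparts_card (s : Multiset ℕ) (h : ∀ x ∈ s, 0 < x) :
    Multiset.card (nuparts s) = Multiset.card s - Multiset.count 1 s := by
  rw [nuparts, Multiset.card_map]
  have hc : Multiset.count 1 s = Multiset.card (Multiset.filter (fun p => ¬ 1 < p) s) := by
    rw [Multiset.count_eq_card_filter_eq]
    congr 1
    apply Multiset.filter_congr
    intro x hx
    have := h x hx
    constructor <;> omega
  have h3 := congrArg Multiset.card (Multiset.filter_add_not (fun p => 1 < p) s)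
  rw [Multiset.card_add] at h3
  omega

lemma count_one_nuparts (s : Multiset ℕ) (h : ∀ x ∈ s, 0 < x) :
    Multiset.count 1 s = Multiset.card s - Multiset.card (nuparts s) := by
  have h1 := nuparts_card s h
  have h2 : Multiset.count 1 s ≤ Multiset.card s := Multiset.count_le_card 1 s
  omega

lemma count_nuparts (s : Multiset ℕ) (h : ∀ x ∈ s, 0 < x) (t : ℕ) (ht : 1 ≤ t) :
    Multiset.count t (nuparts s) = Multiset.count (t+1) s := by
  rw [nuparts, Multiset.count_map, Multiset.filter_filter,
    Multiset.count_eq_card_filter_eq]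
  congr 1
  apply Multiset.filter_congr
  intro x hx
  have := h x hx
  constructor <;> omega

lemma filter_card_nuparts (s : Multiset ℕ) (h : ∀ x ∈ s, 0 < x) (t : ℕ) (ht : 1 ≤ t) :
    Multiset.card (Multiset.filter (fun p => t ≤ p) (nuparts s))
      = Multiset.card (Multiset.filter (fun p => t + 1 ≤ p) s) := by
  rw [nuparts, Multiset.filter_map]
  rw [Multiset.card_map]
  show Multiset.card (Multiset.filter (fun p => t ≤ p - 1) (Multiset.filter (fun p => 1 < p) s)) = _
  rw [Multiset.filter_filter]
  congr 1
  apply Multiset.filter_congr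
  intro x hx
  have := h x hx
  constructor <;> omega

lemma filter_one_card (s : Multiset ℕ) (h : ∀ x ∈ s, 0 < x) :
    Multiset.card (Multiset.filter (fun p => 1 ≤ p) s) = Multiset.card s := by
  congr 1
  rw [Multiset.filter_eq_self]
  intro x hx
  exact h x hx

lemma filter_card_zero (s : Multiset ℕ) (t : ℕ) (ht : s.sum < t) :
    Multiset.card (Multiset.filter (fun p => t ≤ p) s) = 0 := by
  rw [Multiset.card_eq_zero, Multiset.filter_eq_nil]
  intro x hx
  have := mem_le_sum s x hx
  omega

lemma count_zero_of_gt (s : Multiset ℕ) (t : ℕ) (ht : s.sum < t) :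
    Multiset.count t s = 0 := by
  rw [Multiset.count_eq_zero]
  intro hx
  have := mem_le_sum s t hx
  omega

lemma nuparts_recover (s : Multiset ℕ) (h : ∀ x ∈ s, 0 < x) :
    (nuparts s).map (fun p => p + 1) + Multiset.replicate (Multiset.count 1 s) 1 = s := by
  have h1 : (nuparts s).map (fun p => p + 1) = Multiset.filter (fun p => 1 < p) s := by
    rw [nuparts, Multiset.map_map]
    have : ∀ x ∈ Multiset.filter (fun p => 1 < p) s, ((fun p => p + 1) ∘ (fun p => p - 1)) x = id x := by
      intro x hx
      have := (Multiset.mem_filter.mp hx).2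
      simp only [Function.comp_apply, id_eq]
      omega
    rw [Multiset.map_congr rfl this, Multiset.map_id]
  have h2 : Multiset.replicate (Multiset.count 1 s) 1 = Multiset.filter (fun p => ¬ 1 < p) s := by
    symm
    rw [Multiset.eq_replicate]
    constructor
    · rw [Multiset.count_eq_card_filter_eq]
      congr 1
      apply Multiset.filter_congr
      intro x hx
      have := h x hx
      constructor <;> omega
    · intro b hb
      have h3 := Multiset.mem_filter.mp hb
      have := h b h3.1
      omega
  rw [h1, h2, Multiset.filter_add_not]

lemma nuparts_inv (w : Multiset ℕ) (hw : ∀ x ∈ w, 0 < x) (r : ℕ) :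
    nuparts (w.map (fun p => p + 1) + Multiset.replicate r 1) = w := by
  rw [nuparts, Multiset.filter_add]
  have h1 : Multiset.filter (fun p => 1 < p) (w.map (fun p => p + 1)) = w.map (fun p => p + 1) := by
    rw [Multiset.filter_eq_self]
    intro x hx
    obtain ⟨a, ha, rfl⟩ := Multiset.mem_map.mp hx
    have := hw a ha
    omega
  have h2 : Multiset.filter (fun p => 1 < p) (Multiset.replicate r 1) = 0 := by
    rw [Multiset.filter_eq_nil]
    intro x hx
    rw [Multiset.eq_of_mem_replicate hx]
    omega
  rw [h1, h2, add_zero, Multiset.map_map]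
  have : ∀ x ∈ w, ((fun p => p - 1) ∘ (fun p => p + 1)) x = id x := by
    intro x hx
    simp
  rw [Multiset.map_congr rfl this, Multiset.map_id]

lemma count_one_repl (w : Multiset ℕ) (hw : ∀ x ∈ w, 0 < x) (r : ℕ) :
    Multiset.count 1 (w.map (fun p => p + 1) + Multiset.replicate r 1) = r := by
  rw [Multiset.count_add, Multiset.count_replicate, if_pos rfl]
  have : Multiset.count 1 (w.map (fun p => p + 1)) = 0 := by
    rw [Multiset.count_eq_zero]
    intro hx
    obtain ⟨a, ha, hfa⟩ := Multiset.mem_map.mp hx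
    have := hw a ha
    omega
  omega

----------------------------------------------------------------
-- list-of-counts lemmas
----------------------------------------------------------------

lemma list_range_map_sum (f : ℕ → ℕ) : ∀ (a : ℕ), ((List.range a).map f).sum = ∑ i ∈ range a, f i := by
  intro a
  induction a with
  | zero => simp
  | succ a ih => rw [List.range_succ, List.map_append, List.sum_append, Finset.sum_range_succ, ih]; simp

lemma sum_counts (s : Multiset ℕ) (a : ℕ) (h : ∀ x ∈ s, 1 ≤ x ∧ x ≤ a) :
    ∑ i ∈ range a, Multiset.count (i+1) s = Multiset.card s := by
  induction s using Multiset.induction_on with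
  | empty => simp
  | cons x s ih =>
    have hx := h x (Multiset.mem_cons_self x s)
    have ih2 := ih (fun y hy => h y (Multiset.mem_cons_of_mem hy))
    simp only [Multiset.count_cons, Multiset.card_cons]
    rw [Finset.sum_add_distrib, ih2]
    congr 1
    rw [Finset.sum_eq_single (x - 1)]
    · rw [if_pos (by omega)]
    · intro i hi hne
      rw [if_neg (by omega)]
    · intro hmem
      simp at hmem
      omega

/-- the list of multiplicities, as in the theorem statement -/
def mulist (a : ℕ) (s : Multiset ℕ) : List ℕ := (List.range a).map fun j => Multiset.count (j + 1) s

lemma mulist_sum (s : Multiset ℕ) (a : ℕ) (h : ∀ x ∈ s, 1 ≤ x ∧ x ≤ a) :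
    (mulist a s).sum = Multiset.card s := by
  rw [mulist, list_range_map_sum, sum_counts s a h]

lemma mulist_cons (s : Multiset ℕ) (a : ℕ) :
    mulist (a+1) s = Multiset.count 1 s :: (List.range a).map (fun j => Multiset.count (j+2) s) := by
  rw [mulist, List.range_succ_eq_map, List.map_cons, List.map_map]
  congr 1

lemma mulist_zeros (s : Multiset ℕ) (a t : ℕ) (h : ∀ x ∈ s, 1 ≤ x ∧ x ≤ a) :
    mulist (a + t) s = mulist a s ++ List.replicate t 0 := by
  rw [mulist, mulist, List.range_add, List.map_append, List.map_map]
  congr 1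
  have hlen : (List.map ((fun j => Multiset.count (j + 1) s) ∘ fun x => a + x) (List.range t)).length = t := by
    simp
  rw [List.eq_replicate_iff]
  refine ⟨hlen, ?_⟩
  intro b hb
  simp only [List.mem_map, List.mem_range] at hb
  obtain ⟨i, hi, rfl⟩ := hb
  simp only [Function.comp_apply]
  rw [Multiset.count_eq_zero]
  intro hmem
  have := (h _ hmem).2
  omega

----------------------------------------------------------------
-- the c-statistic
----------------------------------------------------------------

def cstat (a : ℕ) (s : Multiset ℕ) : ℕ :=
  ∑ j ∈ Finset.Icc 1 a, Multiset.card (Multiset.filter (fun p => j ≤ p) s) *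
    Multiset.card (Multiset.filter (fun p => j + 1 ≤ p) s)

lemma sum_Icc_one (f : ℕ → ℕ) (a : ℕ) : ∑ j ∈ Icc 1 a, f j = ∑ i ∈ range a, f (i+1) := by
  induction a with
  | zero => simp
  | succ a ih => rw [Finset.sum_Icc_succ_top (by omega), ih, Finset.sum_range_succ]

lemma cstat_split (s : Multiset ℕ) (n : ℕ) (hpos : ∀ x ∈ s, 0 < x)
    (hsum : s.sum = n) (hn : 1 ≤ n) :
    cstat n s = Multiset.card s * Multiset.card (nuparts s)
      + cstat (n - Multiset.card s) (nuparts s) := by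
  have hK : Multiset.card s ≤ n := hsum ▸ card_le_sum s hpos
  have hK1 : 1 ≤ Multiset.card s := by
    by_contra hc
    have : Multiset.card s = 0 := by omega
    rw [Multiset.card_eq_zero] at this
    rw [this] at hsum
    simp at hsum
    omega
  set K := Multiset.card s with hKdef
  set s' := nuparts s with hs'
  have hsum' : s'.sum = n - K := by rw [hs', nuparts_sum s hpos, hsum]
  rw [cstat, cstat, sum_Icc_one, sum_Icc_one]
  have e1 : ∑ i ∈ range n, Multiset.card (Multiset.filter (fun p => i + 1 ≤ p) s) *
      Multiset.card (Multiset.filter (fun p => i + 1 + 1 ≤ p) s)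
      = ∑ i ∈ range ((n-1)+1), Multiset.card (Multiset.filter (fun p => i + 1 ≤ p) s) *
      Multiset.card (Multiset.filter (fun p => i + 1 + 1 ≤ p) s) := by
    rw [Nat.sub_add_cancel hn]
  rw [e1, Finset.sum_range_succ']
  have g0 : Multiset.card (Multiset.filter (fun p => 0 + 1 ≤ p) s) *
      Multiset.card (Multiset.filter (fun p => 0 + 1 + 1 ≤ p) s) = K * Multiset.card s' := by
    congr 1
    · rw [show (0+1 : ℕ) = 1 by rfl, filter_one_card s hpos]
    · rw [show (0+1+1 : ℕ) = 1+1 by rfl, ← filter_card_nuparts s hpos 1 le_rfl, ← hs',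
        filter_one_card s' (nuparts_pos s)]
  rw [g0]
  have gstep : ∀ i ∈ range (n - 1),
      Multiset.card (Multiset.filter (fun p => (i+1) + 1 ≤ p) s) *
        Multiset.card (Multiset.filter (fun p => (i+1) + 1 + 1 ≤ p) s)
      = Multiset.card (Multiset.filter (fun p => (i+1) ≤ p) s') *
        Multiset.card (Multiset.filter (fun p => (i+1) + 1 ≤ p) s') := by
    intro i _
    rw [filter_card_nuparts s hpos (i+1) (by omega), filter_card_nuparts s hpos (i+2) (by omega)]
  rw [Finset.sum_congr rfl gstep]
  have hsplit : n - 1 = (n - K) + (K - 1) := by omega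
  rw [hsplit, Finset.sum_range_add]
  have hzero : ∀ i ∈ range (K - 1),
      Multiset.card (Multiset.filter (fun p => ((n - K) + i + 1) ≤ p) s') *
        Multiset.card (Multiset.filter (fun p => ((n - K) + i + 1) + 1 ≤ p) s') = 0 := by
    intro i _
    rw [filter_card_zero s' _ (by omega)]
    ring
  rw [Finset.sum_congr rfl hzero]
  simp only [Finset.sum_const_zero]
  ring

----------------------------------------------------------------
-- the Kreweras sum
----------------------------------------------------------------

noncomputable def Fsum (m n j : ℕ) : RatFunc ℚ :=
  ∑ P ∈ Finset.univ.filter (fun P : Nat.Partition n => Multiset.card P.parts = j),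
    RX ^ (((m * (n - j) : ℕ) : ℤ) - (cstat n P.parts : ℤ)) * QM m (mulist n P.parts)

lemma partition_card_le {n : ℕ} (P : Nat.Partition n) : Multiset.card P.parts ≤ n := by
  have := card_le_sum P.parts (fun _ hx => P.parts_pos hx)
  rw [P.parts_sum] at this
  exact this

lemma partition_mem_le {n : ℕ} (P : Nat.Partition n) : ∀ x ∈ P.parts, 1 ≤ x ∧ x ≤ n := by
  intro x hx
  exact ⟨P.parts_pos hx, P.parts_sum ▸ mem_le_sum _ x hx⟩

lemma Fsum_of_big {m n j : ℕ} (h : n < j) : Fsum m n j = 0 := by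
  rw [Fsum, Finset.sum_eq_zero]
  intro P hP
  have h2 := (Finset.mem_filter.mp hP).2
  have := partition_card_le P
  omega

lemma Fsum_zero_pos {m n : ℕ} (h : 1 ≤ n) : Fsum m n 0 = 0 := by
  rw [Fsum, Finset.sum_eq_zero]
  intro P hP
  have h2 := (Finset.mem_filter.mp hP).2
  rw [Multiset.card_eq_zero] at h2
  have := P.parts_sum
  rw [h2] at this
  simp at this
  omega

lemma Fsum_zero_zero (m : ℕ) : Fsum m 0 0 = 1 := by
  rw [Fsum]
  have huniv : (Finset.univ.filter (fun P : Nat.Partition 0 => Multiset.card P.parts = 0)) =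
      {(default : Nat.Partition 0)} := by
    apply Finset.eq_singleton_iff_unique_mem.mpr
    constructor
    · simp only [Finset.mem_filter, Finset.mem_univ, true_and]
      have hp := (default : Nat.Partition 0).parts_sum
      rw [Multiset.card_eq_zero]
      by_contra hc
      obtain ⟨x, hx⟩ := Multiset.exists_mem_of_ne_zero hc
      have := (default : Nat.Partition 0).parts_pos hx
      have := mem_le_sum _ x hx
      omega
    · intro y _
      exact Unique.uniq _ y
  rw [huniv, Finset.sum_singleton]
  have hp : (default : Nat.Partition 0).parts = 0 := by
    have hp := (default : Nat.Partition 0).parts_sum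
    rw [← Multiset.card_eq_zero]
    by_contra hc
    obtain ⟨x, hx⟩ := Multiset.exists_mem_of_ne_zero
      (fun hc2 : (default : Nat.Partition 0).parts = 0 => by rw [hc2] at hc; simp at hc)
    have := (default : Nat.Partition 0).parts_pos hx
    have := mem_le_sum _ x hx
    omega
  rw [hp]
  have e1 : cstat 0 (0 : Multiset ℕ) = 0 := by
    rw [cstat]
    simp
  have e2 : mulist 0 (0 : Multiset ℕ) = [] := by
    rw [mulist]
    simp
  rw [e1, e2, QM_nil]
  simp

lemma QM_append_zeros (N t : ℕ) (l : List ℕ) : QM N (l ++ List.replicate t 0) = QM N l := by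
  show toRF _ = toRF _
  rw [qmultinom_append_zeros]

lemma sum_map_succ (s : Multiset ℕ) :
    (s.map (fun p => p + 1)).sum = s.sum + Multiset.card s := by
  induction s using Multiset.induction_on with
  | empty => simp
  | cons a s ih =>
    simp only [Multiset.map_cons, Multiset.sum_cons, Multiset.card_cons, ih]
    omega

lemma Fsum_rec (m n k : ℕ) (hn : k + 1 ≤ n) :
    Fsum m n (k+1) = ∑ j ∈ range (k+2),
      RX ^ (((m:ℤ) - (k+1)) * (j : ℤ)) * QB (m - j) (k+1-j) * Fsum m (n - (k+1)) j := by
  set n' := n - (k+1) with hn'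
  set H : Nat.Partition n' → RatFunc ℚ := fun ν =>
    RX ^ (((m:ℤ) - (k+1)) * (Multiset.card ν.parts : ℤ)) *
      QB (m - Multiset.card ν.parts) (k+1 - Multiset.card ν.parts) *
      (RX ^ (((m * (n' - Multiset.card ν.parts) : ℕ) : ℤ) - (cstat n' ν.parts : ℤ)) *
        QM m (mulist n' ν.parts)) with hH
  set S : Finset (Nat.Partition n') := Finset.univ.filter
    (fun ν : Nat.Partition n' => Multiset.card ν.parts ≤ k+1) with hS
  have step2 : ∀ j ∈ range (k+2),
      RX ^ (((m:ℤ) - (k+1)) * (j : ℤ)) * QB (m - j) (k+1-j) * Fsum m n' j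
      = ∑ ν ∈ S.filter (fun ν => Multiset.card ν.parts = j), H ν := by
    intro j hj
    rw [Finset.mem_range] at hj
    have hsets : (Finset.univ.filter (fun P : Nat.Partition n' => Multiset.card P.parts = j))
        = S.filter (fun ν => Multiset.card ν.parts = j) := by
      rw [hS, Finset.filter_filter]
      apply Finset.filter_congr
      intro ν _
      constructor
      · intro h; exact ⟨by omega, h⟩
      · intro h; exact h.2
    rw [Fsum, hsets, Finset.mul_sum]
    apply Finset.sum_congr rfl
    intro ν hν
    have hcard : Multiset.card ν.parts = j := (Finset.mem_filter.mp hν).2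
    simp only [hH]
    rw [hcard]
  rw [Finset.sum_congr rfl step2, Finset.sum_fiberwise_of_maps_to (fun ν hν => by
    rw [Finset.mem_range]
    have := (Finset.mem_filter.mp hν).2
    omega) H]
  -- now the bijection
  rw [Fsum]
  refine Finset.sum_bij' (i := fun P hP => (⟨nuparts P.parts, fun {x} hx => nuparts_pos _ x hx, by
      rw [nuparts_sum P.parts (fun x hx => P.parts_pos hx), P.parts_sum,
        (Finset.mem_filter.mp hP).2]⟩ : Nat.Partition n'))
    (j := fun ν hν => (⟨ν.parts.map (fun p => p + 1) + Multiset.replicate (k+1 - Multiset.card ν.parts) 1,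
      fun {x} hx => by
        rcases Multiset.mem_add.mp hx with hx | hx
        · obtain ⟨a, _, rfl⟩ := Multiset.mem_map.mp hx
          omega
        · rw [Multiset.eq_of_mem_replicate hx]; omega, by
      have hc := (Finset.mem_filter.mp hν).2
      have hs := ν.parts_sum
      rw [Multiset.sum_add, Multiset.sum_replicate, smul_eq_mul, mul_one, sum_map_succ, hs]
      omega⟩ : Nat.Partition n))
    ?hi ?hj ?left ?right ?term
  case hi =>
    intro P hP
    rw [hS, Finset.mem_filter]
    refine ⟨Finset.mem_univ _, ?_⟩
    show Multiset.card (nuparts P.parts) ≤ k + 1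
    have h1 := nuparts_card P.parts (fun x hx => P.parts_pos hx)
    have h2 := (Finset.mem_filter.mp hP).2
    omega
  case hj =>
    intro ν hν
    rw [Finset.mem_filter]
    refine ⟨Finset.mem_univ _, ?_⟩
    show Multiset.card (ν.parts.map (fun p => p + 1) + Multiset.replicate (k+1 - Multiset.card ν.parts) 1) = k + 1
    rw [Multiset.card_add, Multiset.card_map, Multiset.card_replicate]
    have hc := (Finset.mem_filter.mp hν).2
    omega
  case left =>
    intro P hP
    apply Nat.Partition.ext
    show Multiset.map (fun p => p + 1) (nuparts P.parts)
      + Multiset.replicate (k + 1 - Multiset.card (nuparts P.parts)) 1 = P.parts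
    have hcnt : Multiset.count 1 P.parts = k + 1 - Multiset.card (nuparts P.parts) := by
      have h1 := count_one_nuparts P.parts (fun x hx => P.parts_pos hx)
      have h2 := (Finset.mem_filter.mp hP).2
      have h3 := Multiset.count_le_card 1 P.parts
      omega
    rw [← hcnt]
    exact nuparts_recover P.parts (fun x hx => P.parts_pos hx)
  case right =>
    intro ν hν
    apply Nat.Partition.ext
    show nuparts (ν.parts.map (fun p => p + 1) + Multiset.replicate (k+1 - Multiset.card ν.parts) 1) = ν.parts
    exact nuparts_inv ν.parts (fun x hx => ν.parts_pos hx) _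
  case term =>
    intro P hP
    have hpos : ∀ x ∈ P.parts, 0 < x := fun x hx => P.parts_pos hx
    have hcard : Multiset.card P.parts = k + 1 := (Finset.mem_filter.mp hP).2
    simp only [hH]
    show RX ^ (((m * (n - (k+1)) : ℕ) : ℤ) - (cstat n P.parts : ℤ)) * QM m (mulist n P.parts)
      = RX ^ (((m:ℤ) - (k+1)) * (Multiset.card (nuparts P.parts) : ℤ)) *
      QB (m - Multiset.card (nuparts P.parts)) (k+1 - Multiset.card (nuparts P.parts)) *
      (RX ^ (((m * (n' - Multiset.card (nuparts P.parts)) : ℕ) : ℤ) - (cstat n' (nuparts P.parts) : ℤ)) *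
        QM m (mulist n' (nuparts P.parts)))
    set s := P.parts with hsdef
    set s' := nuparts s with hs'def
    set j := Multiset.card s' with hjdef
    have hsum : s.sum = n := P.parts_sum
    have hsum' : s'.sum = n' := by
      rw [hs'def, nuparts_sum s hpos, hsum, hcard]
    have hpos' : ∀ x ∈ s', 0 < x := fun x hx => nuparts_pos s x hx
    have hj_le : j ≤ n' := by
      rw [hjdef, ← hsum']
      exact card_le_sum s' hpos'
    have hjk : j ≤ k + 1 := by
      have h1 := nuparts_card s hpos
      rw [hjdef, h1]
      omega
    have hmem' : ∀ x ∈ s', 1 ≤ x ∧ x ≤ n' := by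
      intro x hx
      exact ⟨hpos' x hx, hsum' ▸ mem_le_sum s' x hx⟩
    have hcstat : cstat n s = (k+1) * j + cstat n' s' := by
      have := cstat_split s n hpos hsum (by omega)
      rw [hcard] at this
      rw [this, hjdef]
    have hcount1 : Multiset.count 1 s = k + 1 - j := by
      have h1 := count_one_nuparts s hpos
      rw [h1, hcard, hjdef]
    have hmulist : mulist n s = (k+1-j) :: (mulist n' s' ++ List.replicate ((n-1) - n') 0) := by
      have e1 : n = (n-1) + 1 := by omega
      rw [e1, mulist_cons, hcount1]
      congr 1
      calc (List.range (n-1)).map (fun i => Multiset.count (i+2) s)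
          = (List.range (n-1)).map (fun i => Multiset.count (i+1) s') := by
            apply List.map_congr_left
            intro i _
            rw [hs'def]
            exact (count_nuparts s hpos (i+1) (by omega)).symm
        _ = mulist (n-1) s' := rfl
        _ = mulist (n' + ((n-1) - n')) s' := by congr 1; omega
        _ = mulist n' s' ++ List.replicate ((n-1) - n') 0 := mulist_zeros s' n' _ hmem'
    have hmsum : (mulist n' s').sum = j := by
      rw [mulist_sum s' n' hmem', hjdef]
    have hQM : QM m (mulist n s) = QB (m - j) (k+1-j) * QM m (mulist n' s') := by
      rw [hmulist, QM_cons, QM_append_zeros]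
      have := QM_shift m (k+1-j) (mulist n' s')
      rw [hmsum] at this
      exact this
    have hexp : ((m * (n - (k+1)) : ℕ) : ℤ) - (cstat n s : ℤ)
        = ((m:ℤ) - (k+1)) * (j : ℤ) + (((m * (n' - j) : ℕ) : ℤ) - (cstat n' s' : ℤ)) := by
      have hc2 : (cstat n s : ℤ) = ((k+1) * j : ℕ) + (cstat n' s' : ℕ) := by
        exact_mod_cast congrArg (Nat.cast : ℕ → ℤ) hcstat
      have h1 : ((m * (n - (k+1)) : ℕ) : ℤ) = (m : ℤ) * (n' : ℤ) := by
        rw [← hn']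
        push_cast
        ring
      have h2 : ((m * (n' - j) : ℕ) : ℤ) = (m : ℤ) * ((n' : ℤ) - (j : ℤ)) := by
        rw [Nat.cast_mul, Nat.cast_sub hj_le]
      rw [hc2, h1, h2]
      push_cast
      ring
    rw [hQM, hexp, zpow_add₀ RX_ne_zero]
    ring

theorem Fmain : ∀ n : ℕ, 1 ≤ n → ∀ m k : ℕ,
    Fsum m n (k+1) = RX ^ (((n:ℤ) - (k+1)) * ((m:ℤ) - (k+1))) * QB (n-1) k * QB m (k+1) := by
  intro n
  induction n using Nat.strong_induction_on with
  | _ n IH =>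
    intro hn m k
    rcases lt_or_ge n (k+1) with hlt | hge
    · rw [Fsum_of_big hlt, QB_eq_zero (show n - 1 < k by omega)]
      ring
    · rw [Fsum_rec m n k hge]
      rcases Nat.eq_zero_or_pos (n - (k+1)) with h0 | hpos
      · -- n = k+1
        have hnk : n = k + 1 := by omega
        rw [Finset.sum_eq_single 0]
        · rw [h0, Fsum_zero_zero]
          have e2 : ((n:ℤ) - (k+1)) = 0 := by rw [hnk]; push_cast; ring
          rw [e2, zero_mul, zpow_zero]
          have e3 : n - 1 = k := by omega
          rw [e3, QB_self]
          have e4 : ((m:ℤ) - (k+1)) * ((0:ℕ):ℤ) = 0 := by push_cast; ring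
          norm_num
        · intro j hj hj0
          have : 0 < j := by omega
          rw [h0, Fsum_of_big this]
          ring
        · intro h
          simp at h
      · -- n - (k+1) ≥ 1
        set N := n - (k+1) with hN
        have hn' : 1 ≤ N := hpos
        have hlt' : N < n := by omega
        have hcast : (N:ℤ) = (n:ℤ) - (k+1) := by
          rw [hN, Nat.cast_sub hge]
          push_cast
          ring
        rw [Finset.sum_range_succ']
        rw [Fsum_zero_pos hn', mul_zero, add_zero]
        have key : ∀ i ∈ range (k+1),
            RX ^ (((m:ℤ) - (k+1)) * ((i+1:ℕ):ℤ)) * QB (m - (i+1)) (k+1 - (i+1)) * Fsum m N (i+1)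
            = RX ^ (((n:ℤ) - (k+1)) * ((m:ℤ) - (k+1))) * QB m (k+1) *
              (RX ^ ((((N-1:ℕ):ℤ) - ((i:ℕ):ℤ)) * (((k:ℕ):ℤ) - ((i:ℕ):ℤ))) * QB (N-1) i * QB (k+1) (k-i)) := by
          intro i hi
          rw [Finset.mem_range] at hi
          rw [IH N hlt' hn' m i]
          have htri := QB_trinom (show i+1 ≤ k+1 by omega) (m := m)
          have hsymm : QB (k+1) (i+1) = QB (k+1) (k-i) := by
            rw [QB_symm (show i+1 ≤ k+1 by omega)]
            congr 1
            omega
          have hexp : RX ^ (((m:ℤ) - (k+1)) * ((i+1:ℕ):ℤ)) * RX ^ (((N:ℤ) - (i+1)) * ((m:ℤ) - (i+1)))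
              = RX ^ (((n:ℤ) - (k+1)) * ((m:ℤ) - (k+1))) *
                RX ^ ((((N-1:ℕ):ℤ) - ((i:ℕ):ℤ)) * (((k:ℕ):ℤ) - ((i:ℕ):ℤ))) := by
            rw [← zpow_add₀ RX_ne_zero, ← zpow_add₀ RX_ne_zero]
            congr 1
            have hc1 : ((N-1:ℕ):ℤ) = (N:ℤ) - 1 := Nat.cast_sub hn'
            rw [hc1, ← hcast]
            push_cast
            ring
          calc RX ^ (((m:ℤ) - (k+1)) * ((i+1:ℕ):ℤ)) * QB (m - (i+1)) (k+1 - (i+1)) *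
                (RX ^ (((N:ℤ) - (i+1)) * ((m:ℤ) - (i+1))) * QB (N-1) i * QB m (i+1))
              = (RX ^ (((m:ℤ) - (k+1)) * ((i+1:ℕ):ℤ)) * RX ^ (((N:ℤ) - (i+1)) * ((m:ℤ) - (i+1)))) *
                (QB m (i+1) * QB (m - (i+1)) (k+1 - (i+1))) * QB (N-1) i := by ring
            _ = _ := by rw [hexp, htri, hsymm]; ring
        rw [Finset.sum_congr rfl key, ← Finset.mul_sum, ← QB_vandermonde (k+1) (N-1) k]
        have e5 : N - 1 + (k+1) = n - 1 := by omega
        rw [e5]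
        ring

lemma toRF_qnat (a : ℕ) : QN a = ∑ i ∈ Finset.range a, (RatFunc.X : RatFunc ℚ) ^ i := by
  show toRF (qnat a) = _
  rw [qnat]
  induction a with
  | zero => simp [toRF]
  | succ a ih => rw [Finset.sum_range_succ, Finset.sum_range_succ, toRF_add, ih, toRF_X_pow]

/-- Type `A_{n−1}` q-Narayana formula: for `gcd(m,n) = 1` and `0 ≤ k ≤ n−1`, the sum of
the q-Kreweras numbers `q^{m(n−ℓ(λ))−c(λ)} (1/[m]_q) [m choose μ(λ)]_q` over partitions
`λ` of `n` with `ℓ(λ) = k+1` equals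
`q^{(n−1−k)(m−1−k)} (1/[k+1]_q) [n−1 choose k]_q [m−1 choose k]_q`,
as rational functions in `q`. -/
theorem stmt_19 (n m k : ℕ) (hn : 0 < n) (hm : 0 < m) (hgcd : Nat.gcd m n = 1)
    (hk : k ≤ n - 1) :
    ∑ P ∈ Finset.univ.filter
        (fun P : Nat.Partition n => Multiset.card P.parts = k + 1),
      (RatFunc.X : RatFunc ℚ) ^
          (((m * (n - Multiset.card P.parts) : ℕ) : ℤ) -
            ((∑ j ∈ Finset.Icc 1 n,
                Multiset.card (P.parts.filter (fun p => j ≤ p)) *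
                  Multiset.card (P.parts.filter (fun p => j + 1 ≤ p)) : ℕ) : ℤ)) *
        (toRF (qmultinom m ((List.range n).map fun j => Multiset.count (j + 1) P.parts)) /
          (∑ i ∈ Finset.range m, (RatFunc.X : RatFunc ℚ) ^ i)) =
      (RatFunc.X : RatFunc ℚ) ^ ((n - 1 - k) * (m - 1 - k)) *
        (toRF (qbinom (n - 1) k) * toRF (qbinom (m - 1) k) /
          (∑ i ∈ Finset.range (k + 1), (RatFunc.X : RatFunc ℚ) ^ i)) := by
  have hk1n : k + 1 ≤ n := by omega
  rw [← toRF_qnat m, ← toRF_qnat (k+1)]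
  have hL : ∑ P ∈ Finset.univ.filter
        (fun P : Nat.Partition n => Multiset.card P.parts = k + 1),
      (RatFunc.X : RatFunc ℚ) ^
          (((m * (n - Multiset.card P.parts) : ℕ) : ℤ) -
            ((∑ j ∈ Finset.Icc 1 n,
                Multiset.card (P.parts.filter (fun p => j ≤ p)) *
                  Multiset.card (P.parts.filter (fun p => j + 1 ≤ p)) : ℕ) : ℤ)) *
        (toRF (qmultinom m ((List.range n).map fun j => Multiset.count (j + 1) P.parts)) /
          QN m)
      = Fsum m n (k+1) * (QN m)⁻¹ := by
    rw [Fsum, Finset.sum_mul]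
    apply Finset.sum_congr rfl
    intro P hP
    have hc : Multiset.card P.parts = k+1 := (Finset.mem_filter.mp hP).2
    simp only [cstat, mulist]
    rw [hc, div_eq_mul_inv]
    ring
  rw [hL, Fmain n hn m k]
  rcases le_or_gt (k+1) m with hmk | hmk
  · have hE : (RatFunc.X : RatFunc ℚ) ^ (((n:ℤ) - (k+1)) * ((m:ℤ) - (k+1)))
        = (RatFunc.X : RatFunc ℚ) ^ ((n - 1 - k) * (m - 1 - k)) := by
      rw [← RXz ((n - 1 - k) * (m - 1 - k))]
      congr 1
      rw [Nat.cast_mul, Nat.cast_sub (show k ≤ n - 1 by omega), Nat.cast_sub (show k ≤ m - 1 by omega),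
        Nat.cast_sub (show 1 ≤ n by omega), Nat.cast_sub (show 1 ≤ m by omega)]
      push_cast
      ring
    rw [show (RatFunc.X : RatFunc ℚ) = RX from rfl] at hE ⊢
    rw [hE]
    have hrel := QN_mul_QB (k := k) hm
    have n1 := QN_ne_zero (show 0 < m from hm)
    have n2 := QN_ne_zero (show 0 < k + 1 by omega)
    show _ = RX ^ ((n - 1 - k) * (m - 1 - k)) * (QB (n-1) k * QB (m-1) k / QN (k+1))
    field_simp
    linear_combination (-(RX ^ ((n - 1 - k) * (m - 1 - k)) * QB (n-1) k)) * hrel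
  · rw [QB_eq_zero (show m < k + 1 from hmk)]
    rw [show toRF (qbinom (m-1) k) = QB (m-1) k from rfl, QB_eq_zero (show m - 1 < k by omega)]
    ring
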